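/- Let p ∈ (N,∞), Ω ⊂ ℝ^N. Assume A_{αβ}, b satisfy the Carathéodory, growth (bounded by an increasing f of |μ|+|ξ|), affine-in-(μ,ξ) structure for b, and uniform equicontinuity assumptions. Then the Nemytskii operators Ã_{αβ}(u,U)(x) := A_{αβ}(x,u(x),U(x)) mapping X̃ := (L^p ∩ L^∞)(Ω;ℝ^M) × (L^p ∩ L^∞)(Ω;ℝ^{M×N}) into L^∞(Ω;ℝ^{M×M}), and b̃(u,U)(x) := b(x,u(x),U(x)) mapping X̃ into L^p(Ω;ℝ^M), are well defined, map bounded sets to bounded sets, and are uniformly continuous on bounded subsets of X̃. -/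

import Mathlib

open MeasureTheory Set Filter
open scoped ENNReal NNReal Topology

lemma aux_comp_meas {α : Type*} [MeasurableSpace α] {E F : Type*}
    [NormedAddCommGroup E] [NormedAddCommGroup F]
    (μ : Measure α) (G : α → E → F)
    (hGm : ∀ m : E, AEStronglyMeasurable (fun x => G x m) μ)
    (hGc : ∀ᵐ x ∂μ, Continuous (G x))
    {w : α → E} (hw : AEStronglyMeasurable w μ) :
    AEStronglyMeasurable (fun x => G x (w x)) μ := by
  obtain ⟨w', hw'sm, hw'ae⟩ := hw
  have hsimple : ∀ s : SimpleFunc α E, AEStronglyMeasurable (fun x => G x (s x)) μ := by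
    intro s
    have heq : (fun x => G x (s x)) =
        fun x => ∑ c ∈ s.range, (s ⁻¹' {c}).indicator (fun y => G y c) x := by
      funext x
      rw [Finset.sum_eq_single (s x)]
      · simp [Set.indicator_of_mem, Set.mem_preimage]
      · intro c _ hc
        exact Set.indicator_of_notMem (by simp [Set.mem_preimage]; exact fun h => hc h.symm) _
      · intro h
        exact absurd (SimpleFunc.mem_range_self s x) h
    rw [heq]
    exact Finset.aestronglyMeasurable_fun_sum _ fun c _ =>
      (hGm c).indicator (s.measurableSet_fiber c)
  have h1 : AEStronglyMeasurable (fun x => G x (w' x)) μ := by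
    refine aestronglyMeasurable_of_tendsto_ae atTop (fun n => hsimple (hw'sm.approx n)) ?_
    filter_upwards [hGc] with x hx
    exact (hx.tendsto (w' x)).comp (hw'sm.tendsto_approx x)
  refine h1.congr ?_
  filter_upwards [hw'ae] with x hx
  rw [hx]

open Metric in
lemma aux_equi_unif {α : Type*} {E F : Type*}
    [NormedAddCommGroup E] [NormedSpace ℝ E] [ProperSpace E] [NormedAddCommGroup F]
    (Ω : Set α) (G : α → E → F)
    (h : ∀ m₀ : E, ∀ ε > (0:ℝ), ∃ δ > (0:ℝ), ∀ x ∈ Ω, ∀ m : E,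
      ‖m - m₀‖ < δ → ‖G x m - G x m₀‖ ≤ ε)
    (C : ℝ) {ε : ℝ} (hε : 0 < ε) :
    ∃ δ > (0:ℝ), ∀ x ∈ Ω, ∀ m m' : E, ‖m‖ ≤ C → ‖m'‖ ≤ C → ‖m - m'‖ < δ →
      ‖G x m - G x m'‖ ≤ ε := by
  rcases lt_or_ge C 0 with hC | hC
  · refine ⟨1, one_pos, fun x _ m m' hm _ _ => ?_⟩
    exact absurd (le_trans (norm_nonneg m) hm) (not_le.2 hC)
  choose δ hδpos hδ using fun m₀ : E => h m₀ (ε/2) (half_pos hε)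
  have hK : IsCompact (closedBall (0:E) C) := isCompact_closedBall 0 C
  have hcover : closedBall (0:E) C ⊆ ⋃ m₀ ∈ closedBall (0:E) C, ball m₀ (δ m₀ / 2) :=
    fun m hm => Set.mem_biUnion hm (mem_ball_self (half_pos (hδpos m)))
  obtain ⟨t, hts, htfin, htcover⟩ := hK.elim_finite_subcover_image
    (fun m₀ _ => isOpen_ball) hcover
  classical
  set T := htfin.toFinset with hT
  have hmemT : ∀ i, i ∈ T ↔ i ∈ t := fun i => htfin.mem_toFinset
  have h0K : (0:E) ∈ closedBall (0:E) C := by simpa using hC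
  obtain ⟨i₀, hi₀t, _⟩ := Set.mem_iUnion₂.1 (htcover h0K)
  have htne : T.Nonempty := ⟨i₀, (hmemT i₀).2 hi₀t⟩
  refine ⟨T.inf' htne (fun i => δ i / 2), ?_, ?_⟩
  · exact (Finset.lt_inf'_iff htne).2 fun i _ => half_pos (hδpos i)
  · intro x hx m m' hm hm' hmm'
    have hmK : m ∈ closedBall (0:E) C := by
      simpa [mem_closedBall, dist_zero_right] using hm
    obtain ⟨i, hit, hmi⟩ := Set.mem_iUnion₂.1 (htcover hmK)
    have h1 : ‖m - i‖ < δ i := by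
      have := mem_ball_iff_norm.1 hmi
      linarith [hδpos i]
    have h2 : ‖m' - i‖ < δ i := by
      have hd : ‖m - m'‖ < δ i / 2 :=
        lt_of_lt_of_le hmm' (Finset.inf'_le _ ((hmemT i).2 hit))
      have := mem_ball_iff_norm.1 hmi
      calc ‖m' - i‖ ≤ ‖m' - m‖ + ‖m - i‖ := norm_sub_le_norm_sub_add_norm_sub _ _ _
        _ < δ i / 2 + δ i / 2 := by
            rw [norm_sub_rev m']
            exact add_lt_add hd this
        _ = δ i := by ring
    calc ‖G x m - G x m'‖ ≤ ‖G x m - G x i‖ + ‖G x i - G x m'‖ :=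
          norm_sub_le_norm_sub_add_norm_sub _ _ _
      _ ≤ ε/2 + ε/2 := add_le_add (hδ i x hx m h1) (by
          rw [norm_sub_rev]; exact hδ i x hx m' h2)
      _ = ε := by ring

lemma aux_ae_bound {α F : Type*} [MeasurableSpace α] [NormedAddCommGroup F]
    {μ : Measure α} {f : α → F} {C : ℝ} (hC : 0 ≤ C)
    (h : eLpNorm f ⊤ μ ≤ ENNReal.ofReal C) : ∀ᵐ x ∂μ, ‖f x‖ ≤ C := by
  rw [eLpNorm_exponent_top] at h
  filter_upwards [ae_le_eLpNormEssSup (f := f) (μ := μ)] with x hx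
  have h2 : (‖f x‖₊ : ℝ≥0∞) ≤ ENNReal.ofReal C := le_trans hx h
  have h3 := ENNReal.toReal_mono ENNReal.ofReal_ne_top h2
  rwa [ENNReal.coe_toReal, coe_nnnorm, ENNReal.toReal_ofReal hC] at h3

lemma aux_nemytskii_equi_unif2 {α : Type*} {E₁ E₂ F : Type*}
    [NormedAddCommGroup E₁] [NormedSpace ℝ E₁] [ProperSpace E₁]
    [NormedAddCommGroup E₂] [NormedSpace ℝ E₂] [ProperSpace E₂]
    [NormedAddCommGroup F]
    (Ω : Set α) (G : α → E₁ → E₂ → F)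
    (h : ∀ (μ₀ : E₁) (ξ₀ : E₂), ∀ ε > (0:ℝ), ∃ δ > (0:ℝ), ∀ x ∈ Ω, ∀ μ ξ,
      ‖μ - μ₀‖ + ‖ξ - ξ₀‖ < δ → ‖G x μ ξ - G x μ₀ ξ₀‖ ≤ ε)
    (C : ℝ) {ε : ℝ} (hε : 0 < ε) :
    ∃ δ > (0:ℝ), ∀ x ∈ Ω, ∀ (μ₁ : E₁) (ξ₁ : E₂) (μ₂ : E₁) (ξ₂ : E₂),
      ‖μ₁‖ ≤ C → ‖ξ₁‖ ≤ C → ‖μ₂‖ ≤ C → ‖ξ₂‖ ≤ C →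
      ‖μ₁ - μ₂‖ + ‖ξ₁ - ξ₂‖ < δ → ‖G x μ₁ ξ₁ - G x μ₂ ξ₂‖ ≤ ε := by
  have h' : ∀ m₀ : E₁ × E₂, ∀ ε > (0:ℝ), ∃ δ > (0:ℝ), ∀ x ∈ Ω, ∀ m : E₁ × E₂,
      ‖m - m₀‖ < δ → ‖(fun x m => G x m.1 m.2) x m - (fun x m => G x m.1 m.2) x m₀‖ ≤ ε := by
    intro m₀ ε' hε'
    obtain ⟨δ, hδpos, hδ⟩ := h m₀.1 m₀.2 ε' hε'
    refine ⟨δ/2, half_pos hδpos, fun x hx m hm => ?_⟩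
    refine hδ x hx m.1 m.2 ?_
    have h1 : ‖m.1 - m₀.1‖ ≤ ‖m - m₀‖ := by
      simpa using norm_fst_le (m - m₀)
    have h2 : ‖m.2 - m₀.2‖ ≤ ‖m - m₀‖ := by
      simpa using norm_snd_le (m - m₀)
    linarith
  obtain ⟨δ, hδpos, hδ⟩ := aux_equi_unif Ω (fun x (m : E₁ × E₂) => G x m.1 m.2) h' C hε
  refine ⟨δ, hδpos, fun x hx μ₁ ξ₁ μ₂ ξ₂ h1 h2 h3 h4 hd => ?_⟩
  refine hδ x hx (μ₁, ξ₁) (μ₂, ξ₂) ?_ ?_ ?_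
  · exact max_le h1 h2
  · exact max_le h3 h4
  · refine lt_of_le_of_lt (max_le ?_ ?_) hd
    · exact le_add_of_nonneg_right (norm_nonneg _)
    · exact le_add_of_nonneg_left (norm_nonneg _)

set_option maxHeartbeats 1000000 in
/-- Under the Carathéodory, growth, affine-structure and uniform
equicontinuity assumptions on the coefficients `A` and `b`, the Nemytskii operators
`Ã(u,U)(x) = A(x,u(x),U(x))` and `b̃(u,U)(x) = b(x,u(x),U(x))` map
`X̃ = (L^p ∩ L^∞)(Ω;ℝ^M) × (L^p ∩ L^∞)(Ω;ℝ^{M×N})` into `L^∞` resp. `L^p`; they are well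
defined, map bounded sets onto bounded sets, and are uniformly continuous on bounded
subsets of `X̃`. -/
theorem nemytskii_operators_W2p_setting {N M : ℕ}
    (Ω : Set (EuclideanSpace ℝ (Fin N))) (hΩo : IsOpen Ω) (hΩc : IsConnected Ω)
    (p : ℝ) (hpN : (N:ℝ) < p)
    (A : EuclideanSpace ℝ (Fin N) → EuclideanSpace ℝ (Fin M) →
      (EuclideanSpace ℝ (Fin N) →L[ℝ] EuclideanSpace ℝ (Fin M)) →
      (EuclideanSpace ℝ (Fin M) →L[ℝ] EuclideanSpace ℝ (Fin M)))
    (b : EuclideanSpace ℝ (Fin N) → EuclideanSpace ℝ (Fin M) →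
      (EuclideanSpace ℝ (Fin N) →L[ℝ] EuclideanSpace ℝ (Fin M)) →
      EuclideanSpace ℝ (Fin M))
    (b₀ : EuclideanSpace ℝ (Fin N) → EuclideanSpace ℝ (Fin M) →
      (EuclideanSpace ℝ (Fin N) →L[ℝ] EuclideanSpace ℝ (Fin M)) →
      (EuclideanSpace ℝ (Fin M) →L[ℝ] EuclideanSpace ℝ (Fin M)))
    (Bc : EuclideanSpace ℝ (Fin N) → EuclideanSpace ℝ (Fin M) →
      (EuclideanSpace ℝ (Fin N) →L[ℝ] EuclideanSpace ℝ (Fin M)) →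
      ((EuclideanSpace ℝ (Fin N) →L[ℝ] EuclideanSpace ℝ (Fin M)) →L[ℝ]
        EuclideanSpace ℝ (Fin M)))
    (f : ℝ → ℝ) (hf : Monotone f) (hf1 : ∀ t, 1 ≤ f t)
    -- Carathéodory conditions
    (hAmeas : ∀ μ ξ, AEStronglyMeasurable (fun x => A x μ ξ) (volume.restrict Ω))
    (hAcont : ∀ᵐ x ∂(volume.restrict Ω), Continuous (fun m :
      EuclideanSpace ℝ (Fin M) × (EuclideanSpace ℝ (Fin N) →L[ℝ] EuclideanSpace ℝ (Fin M))
      => A x m.1 m.2))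
    (hbmeas : ∀ μ ξ, AEStronglyMeasurable (fun x => b x μ ξ) (volume.restrict Ω))
    (hbcont : ∀ᵐ x ∂(volume.restrict Ω), Continuous (fun m :
      EuclideanSpace ℝ (Fin M) × (EuclideanSpace ℝ (Fin N) →L[ℝ] EuclideanSpace ℝ (Fin M))
      => b x m.1 m.2))
    -- growth conditions
    (hAg : ∀ x ∈ Ω, ∀ μ ξ, ‖A x μ ξ‖ ≤ f (‖μ‖ + ‖ξ‖))
    (hb₀g : ∀ x ∈ Ω, ∀ μ ξ, ‖b₀ x μ ξ‖ ≤ f (‖μ‖ + ‖ξ‖))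
    (hBcg : ∀ x ∈ Ω, ∀ μ ξ, ‖Bc x μ ξ‖ ≤ f (‖μ‖ + ‖ξ‖))
    -- affine structure of b
    (hbstr : ∀ x ∈ Ω, ∀ μ ξ, b x μ ξ = b₀ x μ ξ μ + Bc x μ ξ ξ + b x 0 0)
    (hb00 : MemLp (fun x => b x 0 0) (ENNReal.ofReal p) (volume.restrict Ω))
    -- equicontinuity in (μ,ξ), uniform in x
    (hAeq : ∀ μ₀ ξ₀, ∀ ε > (0:ℝ), ∃ δ > (0:ℝ), ∀ x ∈ Ω, ∀ μ ξ,
      ‖μ - μ₀‖ + ‖ξ - ξ₀‖ < δ → ‖A x μ ξ - A x μ₀ ξ₀‖ ≤ ε)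
    (hb₀eq : ∀ μ₀ ξ₀, ∀ ε > (0:ℝ), ∃ δ > (0:ℝ), ∀ x ∈ Ω, ∀ μ ξ,
      ‖μ - μ₀‖ + ‖ξ - ξ₀‖ < δ → ‖b₀ x μ ξ - b₀ x μ₀ ξ₀‖ ≤ ε)
    (hBceq : ∀ μ₀ ξ₀, ∀ ε > (0:ℝ), ∃ δ > (0:ℝ), ∀ x ∈ Ω, ∀ μ ξ,
      ‖μ - μ₀‖ + ‖ξ - ξ₀‖ < δ → ‖Bc x μ ξ - Bc x μ₀ ξ₀‖ ≤ ε) :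
    -- well defined
    (∀ u U, MemLp u (ENNReal.ofReal p) (volume.restrict Ω) →
      MemLp u ⊤ (volume.restrict Ω) →
      MemLp U (ENNReal.ofReal p) (volume.restrict Ω) →
      MemLp U ⊤ (volume.restrict Ω) →
      MemLp (fun x => A x (u x) (U x)) ⊤ (volume.restrict Ω) ∧
      MemLp (fun x => b x (u x) (U x)) (ENNReal.ofReal p) (volume.restrict Ω)) ∧
    -- bounded sets to bounded sets
    (∀ C : ℝ, 0 < C → ∃ C' : ℝ, ∀ u U,
      MemLp u (ENNReal.ofReal p) (volume.restrict Ω) → MemLp u ⊤ (volume.restrict Ω) →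
      MemLp U (ENNReal.ofReal p) (volume.restrict Ω) → MemLp U ⊤ (volume.restrict Ω) →
      eLpNorm u (ENNReal.ofReal p) (volume.restrict Ω) +
        eLpNorm u ⊤ (volume.restrict Ω) +
        eLpNorm U (ENNReal.ofReal p) (volume.restrict Ω) +
        eLpNorm U ⊤ (volume.restrict Ω) ≤ ENNReal.ofReal C →
      eLpNorm (fun x => A x (u x) (U x)) ⊤ (volume.restrict Ω) ≤ ENNReal.ofReal C' ∧
      eLpNorm (fun x => b x (u x) (U x)) (ENNReal.ofReal p) (volume.restrict Ω) ≤
        ENNReal.ofReal C') ∧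
    -- uniform continuity on bounded sets
    (∀ C : ℝ, 0 < C → ∀ ε > (0:ℝ), ∃ δ > (0:ℝ), ∀ u₁ U₁ u₂ U₂,
      MemLp u₁ (ENNReal.ofReal p) (volume.restrict Ω) → MemLp u₁ ⊤ (volume.restrict Ω) →
      MemLp U₁ (ENNReal.ofReal p) (volume.restrict Ω) → MemLp U₁ ⊤ (volume.restrict Ω) →
      MemLp u₂ (ENNReal.ofReal p) (volume.restrict Ω) → MemLp u₂ ⊤ (volume.restrict Ω) →
      MemLp U₂ (ENNReal.ofReal p) (volume.restrict Ω) → MemLp U₂ ⊤ (volume.restrict Ω) →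
      eLpNorm u₁ (ENNReal.ofReal p) (volume.restrict Ω) +
        eLpNorm u₁ ⊤ (volume.restrict Ω) +
        eLpNorm U₁ (ENNReal.ofReal p) (volume.restrict Ω) +
        eLpNorm U₁ ⊤ (volume.restrict Ω) ≤ ENNReal.ofReal C →
      eLpNorm u₂ (ENNReal.ofReal p) (volume.restrict Ω) +
        eLpNorm u₂ ⊤ (volume.restrict Ω) +
        eLpNorm U₂ (ENNReal.ofReal p) (volume.restrict Ω) +
        eLpNorm U₂ ⊤ (volume.restrict Ω) ≤ ENNReal.ofReal C →
      eLpNorm (fun x => u₁ x - u₂ x) (ENNReal.ofReal p) (volume.restrict Ω) +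
        eLpNorm (fun x => u₁ x - u₂ x) ⊤ (volume.restrict Ω) +
        eLpNorm (fun x => U₁ x - U₂ x) (ENNReal.ofReal p) (volume.restrict Ω) +
        eLpNorm (fun x => U₁ x - U₂ x) ⊤ (volume.restrict Ω) ≤ ENNReal.ofReal δ →
      eLpNorm (fun x => A x (u₁ x) (U₁ x) - A x (u₂ x) (U₂ x)) ⊤
          (volume.restrict Ω) ≤ ENNReal.ofReal ε ∧
      eLpNorm (fun x => b x (u₁ x) (U₁ x) - b x (u₂ x) (U₂ x)) (ENNReal.ofReal p)
          (volume.restrict Ω) ≤ ENNReal.ofReal ε) := by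
  have hp0 : 0 < p := lt_of_le_of_lt (Nat.cast_nonneg N) hpN
  set μΩ := volume.restrict Ω with hμΩdef
  have hmem : ∀ᵐ x ∂μΩ, x ∈ Ω := ae_restrict_mem hΩo.measurableSet
  -- measurability of compositions
  have hmeasA : ∀ u U, AEStronglyMeasurable u μΩ → AEStronglyMeasurable U μΩ →
      AEStronglyMeasurable (fun x => A x (u x) (U x)) μΩ := by
    intro u U hu hU
    have := aux_comp_meas (μ := μΩ)
      (G := fun x (m : EuclideanSpace ℝ (Fin M) ×
        (EuclideanSpace ℝ (Fin N) →L[ℝ] EuclideanSpace ℝ (Fin M))) => A x m.1 m.2)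
      (w := fun x => (u x, U x)) (fun m => hAmeas m.1 m.2) hAcont (hu.prodMk hU)
    exact this
  have hmeasB : ∀ u U, AEStronglyMeasurable u μΩ → AEStronglyMeasurable U μΩ →
      AEStronglyMeasurable (fun x => b x (u x) (U x)) μΩ := by
    intro u U hu hU
    have := aux_comp_meas (μ := μΩ)
      (G := fun x (m : EuclideanSpace ℝ (Fin M) ×
        (EuclideanSpace ℝ (Fin N) →L[ℝ] EuclideanSpace ℝ (Fin M))) => b x m.1 m.2)
      (w := fun x => (u x, U x)) (fun m => hbmeas m.1 m.2) hbcont (hu.prodMk hU)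
    exact this
  -- extraction of the four components of a four-fold sum bound
  have h4 : ∀ {a b c d e : ℝ≥0∞}, a + b + c + d ≤ e → a ≤ e ∧ b ≤ e ∧ c ≤ e ∧ d ≤ e := by
    intro a b c d e h
    exact ⟨le_trans (le_add_right (le_add_right le_self_add)) h,
      le_trans (le_add_right (le_add_right le_add_self)) h,
      le_trans (le_add_right le_add_self) h, le_trans le_add_self h⟩
  -- pointwise bound for the difference of b-compositions
  have hbdiff : ∀ x ∈ Ω, ∀ (μ₁ : EuclideanSpace ℝ (Fin M))
      (ξ₁ : EuclideanSpace ℝ (Fin N) →L[ℝ] EuclideanSpace ℝ (Fin M)) (μ₂ ξ₂),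
      ‖b x μ₁ ξ₁ - b x μ₂ ξ₂‖ ≤
        ‖b₀ x μ₁ ξ₁ - b₀ x μ₂ ξ₂‖ * ‖μ₁‖ + ‖b₀ x μ₂ ξ₂‖ * ‖μ₁ - μ₂‖ +
        (‖Bc x μ₁ ξ₁ - Bc x μ₂ ξ₂‖ * ‖ξ₁‖ + ‖Bc x μ₂ ξ₂‖ * ‖ξ₁ - ξ₂‖) := by
    intro x hx μ₁ ξ₁ μ₂ ξ₂
    rw [hbstr x hx μ₁ ξ₁, hbstr x hx μ₂ ξ₂]
    have hkey : b₀ x μ₁ ξ₁ μ₁ + Bc x μ₁ ξ₁ ξ₁ + b x 0 0 -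
        (b₀ x μ₂ ξ₂ μ₂ + Bc x μ₂ ξ₂ ξ₂ + b x 0 0) =
        ((b₀ x μ₁ ξ₁ - b₀ x μ₂ ξ₂) μ₁ + b₀ x μ₂ ξ₂ (μ₁ - μ₂)) +
        ((Bc x μ₁ ξ₁ - Bc x μ₂ ξ₂) ξ₁ + Bc x μ₂ ξ₂ (ξ₁ - ξ₂)) := by
      simp only [ContinuousLinearMap.sub_apply, map_sub]
      abel
    rw [hkey]
    refine le_trans (norm_add_le _ _) (add_le_add ?_ ?_) <;>
      refine le_trans (norm_add_le _ _) (add_le_add ?_ ?_) <;>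
      exact ContinuousLinearMap.le_opNorm _ _
  -- the common membership/bound construction for b-composition
  have hbmem : ∀ (u U) (Cu CU : ℝ), AEStronglyMeasurable u μΩ → AEStronglyMeasurable U μΩ →
      (∀ᵐ x ∂μΩ, ‖u x‖ ≤ Cu) → (∀ᵐ x ∂μΩ, ‖U x‖ ≤ CU) →
      ∀ᵐ x ∂μΩ, ‖b x (u x) (U x)‖ ≤
        f (Cu + CU) * ‖u x‖ + f (Cu + CU) * ‖U x‖ + ‖b x 0 0‖ := by
    intro u U Cu CU hu hU hau haU
    filter_upwards [hmem, hau, haU] with x hxΩ hxu hxU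
    rw [hbstr x hxΩ]
    refine le_trans (norm_add₃_le) (add_le_add (add_le_add ?_ ?_) le_rfl)
    · refine le_trans (ContinuousLinearMap.le_opNorm _ _) ?_
      exact mul_le_mul (le_trans (hb₀g x hxΩ _ _) (hf (add_le_add hxu hxU)))
        le_rfl (norm_nonneg _) (le_trans (by positivity) (hf1 _))
    · refine le_trans (ContinuousLinearMap.le_opNorm _ _) ?_
      exact mul_le_mul (le_trans (hBcg x hxΩ _ _) (hf (add_le_add hxu hxU)))
        le_rfl (norm_nonneg _) (le_trans (by positivity) (hf1 _))
  refine ⟨?_, ?_, ?_⟩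
  · -- Part 1: well-definedness
    intro u U hup hut hUp hUt
    have hu := hup.aestronglyMeasurable
    have hU := hUp.aestronglyMeasurable
    set Cu := (eLpNorm u ⊤ μΩ).toReal with hCu
    set CU := (eLpNorm U ⊤ μΩ).toReal with hCU
    have hau : ∀ᵐ x ∂μΩ, ‖u x‖ ≤ Cu :=
      aux_ae_bound ENNReal.toReal_nonneg
        (le_of_eq (ENNReal.ofReal_toReal hut.2.ne).symm)
    have haU : ∀ᵐ x ∂μΩ, ‖U x‖ ≤ CU :=
      aux_ae_bound ENNReal.toReal_nonneg
        (le_of_eq (ENNReal.ofReal_toReal hUt.2.ne).symm)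
    constructor
    · refine memLp_top_of_bound (hmeasA u U hu hU) (f (Cu + CU)) ?_
      filter_upwards [hmem, hau, haU] with x hxΩ hxu hxU
      exact le_trans (hAg x hxΩ _ _) (hf (add_le_add hxu hxU))
    · refine MemLp.of_le (g := fun x => f (Cu + CU) * ‖u x‖ + f (Cu + CU) * ‖U x‖ + ‖b x 0 0‖)
        (((hup.norm.const_mul _).add (hUp.norm.const_mul _)).add hb00.norm)
        (hmeasB u U hu hU) ?_
      filter_upwards [hbmem u U Cu CU hu hU hau haU, hau, haU] with x hx hxu hxU
      refine le_trans hx (le_trans (le_abs_self _) le_rfl)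
  · -- Part 2: bounded sets to bounded sets
    intro C hC
    set q := ENNReal.ofReal p with hq
    set K := f (C + C) with hK
    have hK0 : 0 < K := lt_of_lt_of_le one_pos (hf1 _)
    set τ := ENNReal.LpAddConst q with hτ
    have hτne : τ ≠ ∞ := (ENNReal.LpAddConst_lt_top q).ne
    set Bb : ℝ≥0∞ := τ * (ENNReal.ofReal K * (τ * (ENNReal.ofReal C + ENNReal.ofReal C)) +
      eLpNorm (fun x => b x 0 0) q μΩ) with hBb
    have hBbne : Bb ≠ ∞ := by
      refine ENNReal.mul_ne_top hτne (ENNReal.add_ne_top.2 ⟨?_, hb00.2.ne⟩)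
      exact ENNReal.mul_ne_top ENNReal.ofReal_ne_top
        (ENNReal.mul_ne_top hτne (ENNReal.add_ne_top.2
          ⟨ENNReal.ofReal_ne_top, ENNReal.ofReal_ne_top⟩))
    refine ⟨max K Bb.toReal, ?_⟩
    intro u U hup hut hUp hUt hbound
    have hu := hup.aestronglyMeasurable
    have hU := hUp.aestronglyMeasurable
    obtain ⟨hb1, hb2, hb3, hb4⟩ := h4 hbound
    have hau : ∀ᵐ x ∂μΩ, ‖u x‖ ≤ C := aux_ae_bound hC.le hb2
    have haU : ∀ᵐ x ∂μΩ, ‖U x‖ ≤ C := aux_ae_bound hC.le hb4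
    constructor
    · -- A-part
      rw [eLpNorm_exponent_top]
      refine le_trans (eLpNormEssSup_le_of_ae_bound (C := K) ?_) ?_
      · filter_upwards [hmem, hau, haU] with x hxΩ hxu hxU
        exact le_trans (hAg x hxΩ _ _) (hf (add_le_add hxu hxU))
      · exact ENNReal.ofReal_le_ofReal (le_max_left _ _)
    · -- b-part
      have hstep : eLpNorm (fun x => b x (u x) (U x)) q μΩ ≤
          eLpNorm (fun x => K * (‖u x‖ + ‖U x‖) + ‖b x 0 0‖) q μΩ := by
        refine eLpNorm_mono_ae_real ?_
        filter_upwards [hbmem u U C C hu hU hau haU] with x hx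
        refine le_trans hx (le_of_eq ?_)
        rw [← hK]; ring
      refine le_trans hstep ?_
      have hm1 : AEStronglyMeasurable (fun x => K * (‖u x‖ + ‖U x‖)) μΩ :=
        (hu.norm.add hU.norm).const_mul _
      have hm2 : AEStronglyMeasurable (fun x => ‖b x 0 0‖) μΩ :=
        hb00.aestronglyMeasurable.norm
      have hadd1 : eLpNorm (fun x => K * (‖u x‖ + ‖U x‖) + ‖b x 0 0‖) q μΩ ≤
          τ * (eLpNorm (fun x => K * (‖u x‖ + ‖U x‖)) q μΩ +
            eLpNorm (fun x => ‖b x 0 0‖) q μΩ) :=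
        eLpNorm_add_le' hm1 hm2 q
      have hsmul : eLpNorm (fun x => K * (‖u x‖ + ‖U x‖)) q μΩ =
          ENNReal.ofReal K * eLpNorm (fun x => ‖u x‖ + ‖U x‖) q μΩ := by
        have := eLpNorm_const_smul (c := K) (f := fun x => ‖u x‖ + ‖U x‖) (p := q) (μ := μΩ)
        rw [show (K • fun x => ‖u x‖ + ‖U x‖) = fun x => K * (‖u x‖ + ‖U x‖) from rfl] at this
        rw [this, ← ofReal_norm, Real.norm_of_nonneg hK0.le]
      have hadd2 : eLpNorm (fun x => ‖u x‖ + ‖U x‖) q μΩ ≤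
          τ * (eLpNorm u q μΩ + eLpNorm U q μΩ) := by
        refine le_trans (eLpNorm_add_le' hu.norm hU.norm q) ?_
        rw [eLpNorm_norm, eLpNorm_norm]
      calc eLpNorm (fun x => K * (‖u x‖ + ‖U x‖) + ‖b x 0 0‖) q μΩ
          ≤ τ * (ENNReal.ofReal K * (τ * (eLpNorm u q μΩ + eLpNorm U q μΩ)) +
            eLpNorm (fun x => ‖b x 0 0‖) q μΩ) := by
            refine le_trans hadd1 (mul_le_mul' le_rfl (add_le_add ?_ le_rfl))
            rw [hsmul]
            exact mul_le_mul' le_rfl hadd2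
        _ ≤ Bb := by
            rw [hBb, eLpNorm_norm]
            exact mul_le_mul' le_rfl (add_le_add (mul_le_mul' le_rfl
              (mul_le_mul' le_rfl (add_le_add hb1 hb3))) le_rfl)
        _ ≤ ENNReal.ofReal Bb.toReal := le_of_eq (ENNReal.ofReal_toReal hBbne).symm
        _ ≤ ENNReal.ofReal (max K Bb.toReal) := ENNReal.ofReal_le_ofReal (le_max_right _ _)
  · -- Part 3: uniform continuity
    intro C hC ε hε
    set q := ENNReal.ofReal p with hq
    set K := f (C + C) with hK
    have hK0 : 0 < K := lt_of_lt_of_le one_pos (hf1 _)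
    set τ := ENNReal.LpAddConst q with hτ
    have hτne : τ ≠ ∞ := (ENNReal.LpAddConst_lt_top q).ne
    set T := max 1 τ.toReal with hT
    have hT1 : (1:ℝ) ≤ T := le_max_left _ _
    have hT0 : 0 < T := lt_of_lt_of_le one_pos hT1
    have hτT : τ ≤ ENNReal.ofReal T := by
      conv_lhs => rw [← ENNReal.ofReal_toReal hτne]
      exact ENNReal.ofReal_le_ofReal (le_max_right _ _)
    set ε₂ := ε / (4 * T ^ 2 * C) with hε₂def
    have hε₂0 : 0 < ε₂ := by positivity
    obtain ⟨δA, hδA0, hδA⟩ := aux_nemytskii_equi_unif2 Ω A hAeq C hε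
    obtain ⟨δb, hδb0, hδb⟩ := aux_nemytskii_equi_unif2 Ω b₀ hb₀eq C hε₂0
    obtain ⟨δB, hδB0, hδB⟩ := aux_nemytskii_equi_unif2 Ω Bc hBceq C hε₂0
    set δ := min (min (δA / 3) (δb / 3)) (min (δB / 3) (ε / (8 * T ^ 2 * K))) with hδdef
    have hδ0 : 0 < δ := by positivity
    have hδ1 : δ ≤ δA / 3 := le_trans (min_le_left _ _) (min_le_left _ _)
    have hδ2 : δ ≤ δb / 3 := le_trans (min_le_left _ _) (min_le_right _ _)
    have hδ3 : δ ≤ δB / 3 := le_trans (min_le_right _ _) (min_le_left _ _)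
    have hδ4 : δ ≤ ε / (8 * T ^ 2 * K) := le_trans (min_le_right _ _) (min_le_right _ _)
    refine ⟨δ, hδ0, ?_⟩
    intro u₁ U₁ u₂ U₂ h1p h1t h2p h2t h3p h3t h4p h4t hc1 hc2 hd
    have hu₁ := h1p.aestronglyMeasurable
    have hU₁ := h2p.aestronglyMeasurable
    have hu₂ := h3p.aestronglyMeasurable
    have hU₂ := h4p.aestronglyMeasurable
    have hau₁ : ∀ᵐ x ∂μΩ, ‖u₁ x‖ ≤ C := aux_ae_bound hC.le (h4 hc1).2.1
    have haU₁ : ∀ᵐ x ∂μΩ, ‖U₁ x‖ ≤ C := aux_ae_bound hC.le (h4 hc1).2.2.2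
    have hau₂ : ∀ᵐ x ∂μΩ, ‖u₂ x‖ ≤ C := aux_ae_bound hC.le (h4 hc2).2.1
    have haU₂ : ∀ᵐ x ∂μΩ, ‖U₂ x‖ ≤ C := aux_ae_bound hC.le (h4 hc2).2.2.2
    have hadu : ∀ᵐ x ∂μΩ, ‖u₁ x - u₂ x‖ ≤ δ := aux_ae_bound hδ0.le (h4 hd).2.1
    have hadU : ∀ᵐ x ∂μΩ, ‖U₁ x - U₂ x‖ ≤ δ := aux_ae_bound hδ0.le (h4 hd).2.2.2
    have hdup : eLpNorm (fun x => u₁ x - u₂ x) q μΩ ≤ ENNReal.ofReal δ := (h4 hd).1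
    have hdUp : eLpNorm (fun x => U₁ x - U₂ x) q μΩ ≤ ENNReal.ofReal δ := (h4 hd).2.2.1
    constructor
    · -- A-part
      rw [eLpNorm_exponent_top]
      refine eLpNormEssSup_le_of_ae_bound (C := ε) ?_
      filter_upwards [hmem, hau₁, haU₁, hau₂, haU₂, hadu, hadU]
        with x hx hx1 hx2 hx3 hx4 hx5 hx6
      refine hδA x hx _ _ _ _ hx1 hx2 hx3 hx4 ?_
      have h2δ : 2 * δ < δA := by linarith
      linarith
    · -- b-part
      have hptwise : ∀ᵐ x ∂μΩ, ‖b x (u₁ x) (U₁ x) - b x (u₂ x) (U₂ x)‖ ≤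
          ε₂ * (‖u₁ x‖ + ‖U₁ x‖) + K * (‖u₁ x - u₂ x‖ + ‖U₁ x - U₂ x‖) := by
        filter_upwards [hmem, hau₁, haU₁, hau₂, haU₂, hadu, hadU]
          with x hx hx1 hx2 hx3 hx4 hx5 hx6
        have hdist : ‖u₁ x - u₂ x‖ + ‖U₁ x - U₂ x‖ ≤ 2 * δ := by linarith
        have hΔb₀ : ‖b₀ x (u₁ x) (U₁ x) - b₀ x (u₂ x) (U₂ x)‖ ≤ ε₂ :=
          hδb x hx _ _ _ _ hx1 hx2 hx3 hx4 (by linarith)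
        have hΔBc : ‖Bc x (u₁ x) (U₁ x) - Bc x (u₂ x) (U₂ x)‖ ≤ ε₂ :=
          hδB x hx _ _ _ _ hx1 hx2 hx3 hx4 (by linarith)
        have hb₀2 : ‖b₀ x (u₂ x) (U₂ x)‖ ≤ K :=
          le_trans (hb₀g x hx _ _) (hf (add_le_add hx3 hx4))
        have hBc2 : ‖Bc x (u₂ x) (U₂ x)‖ ≤ K :=
          le_trans (hBcg x hx _ _) (hf (add_le_add hx3 hx4))
        refine le_trans (hbdiff x hx _ _ _ _) ?_
        calc ‖b₀ x (u₁ x) (U₁ x) - b₀ x (u₂ x) (U₂ x)‖ * ‖u₁ x‖ +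
              ‖b₀ x (u₂ x) (U₂ x)‖ * ‖u₁ x - u₂ x‖ +
              (‖Bc x (u₁ x) (U₁ x) - Bc x (u₂ x) (U₂ x)‖ * ‖U₁ x‖ +
                ‖Bc x (u₂ x) (U₂ x)‖ * ‖U₁ x - U₂ x‖)
            ≤ ε₂ * ‖u₁ x‖ + K * ‖u₁ x - u₂ x‖ +
              (ε₂ * ‖U₁ x‖ + K * ‖U₁ x - U₂ x‖) := by
              gcongr <;>
                first | exact hΔb₀ | exact hb₀2 | exact hΔBc | exact hBc2
          _ = ε₂ * (‖u₁ x‖ + ‖U₁ x‖) + K * (‖u₁ x - u₂ x‖ + ‖U₁ x - U₂ x‖) := by ring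
      refine le_trans (eLpNorm_mono_ae_real hptwise) ?_
      have hm1 : AEStronglyMeasurable (fun x => ε₂ * (‖u₁ x‖ + ‖U₁ x‖)) μΩ :=
        (hu₁.norm.add hU₁.norm).const_mul _
      have hm2 : AEStronglyMeasurable
          (fun x => K * (‖u₁ x - u₂ x‖ + ‖U₁ x - U₂ x‖)) μΩ :=
        (((hu₁.sub hu₂).norm).add ((hU₁.sub hU₂).norm)).const_mul _
      have hsmul1 : eLpNorm (fun x => ε₂ * (‖u₁ x‖ + ‖U₁ x‖)) q μΩ ≤
          ENNReal.ofReal ε₂ * (τ * (ENNReal.ofReal C + ENNReal.ofReal C)) := by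
        have hs := eLpNorm_const_smul (c := ε₂) (f := fun x => ‖u₁ x‖ + ‖U₁ x‖)
          (p := q) (μ := μΩ)
        rw [show (ε₂ • fun x => ‖u₁ x‖ + ‖U₁ x‖) =
          fun x => ε₂ * (‖u₁ x‖ + ‖U₁ x‖) from rfl] at hs
        rw [hs, ← ofReal_norm, Real.norm_of_nonneg hε₂0.le]
        refine mul_le_mul' le_rfl ?_
        refine le_trans (eLpNorm_add_le' hu₁.norm hU₁.norm q) ?_
        rw [eLpNorm_norm, eLpNorm_norm]
        exact mul_le_mul' le_rfl (add_le_add (h4 hc1).1 (h4 hc1).2.2.1)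
      have hsmul2 : eLpNorm (fun x => K * (‖u₁ x - u₂ x‖ + ‖U₁ x - U₂ x‖)) q μΩ ≤
          ENNReal.ofReal K * (τ * (ENNReal.ofReal δ + ENNReal.ofReal δ)) := by
        have hs := eLpNorm_const_smul (c := K)
          (f := fun x => ‖u₁ x - u₂ x‖ + ‖U₁ x - U₂ x‖) (p := q) (μ := μΩ)
        rw [show (K • fun x => ‖u₁ x - u₂ x‖ + ‖U₁ x - U₂ x‖) =
          fun x => K * (‖u₁ x - u₂ x‖ + ‖U₁ x - U₂ x‖) from rfl] at hs
        rw [hs, ← ofReal_norm, Real.norm_of_nonneg hK0.le]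
        refine mul_le_mul' le_rfl ?_
        refine le_trans (eLpNorm_add_le' (hu₁.sub hu₂).norm (hU₁.sub hU₂).norm q) ?_
        rw [eLpNorm_norm, eLpNorm_norm]
        exact mul_le_mul' le_rfl (add_le_add hdup hdUp)
      have c1 : ENNReal.ofReal ε₂ * (ENNReal.ofReal T * (ENNReal.ofReal C +
          ENNReal.ofReal C)) = ENNReal.ofReal (ε₂ * (T * (C + C))) := by
        rw [← ENNReal.ofReal_add hC.le hC.le, ← ENNReal.ofReal_mul hT0.le,
          ← ENNReal.ofReal_mul hε₂0.le]
      have c2 : ENNReal.ofReal K * (ENNReal.ofReal T * (ENNReal.ofReal δ +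
          ENNReal.ofReal δ)) = ENNReal.ofReal (K * (T * (δ + δ))) := by
        rw [← ENNReal.ofReal_add hδ0.le hδ0.le, ← ENNReal.ofReal_mul hT0.le,
          ← ENNReal.ofReal_mul hK0.le]
      have hreal : T * (ε₂ * (T * (C + C)) + K * (T * (δ + δ))) ≤ ε := by
        have e1 : T * (ε₂ * (T * (C + C))) = ε / 2 := by
          rw [hε₂def]; field_simp; ring
        have e2 : T * (K * (T * (δ + δ))) ≤ ε / 4 := by
          have : T * (K * (T * (δ + δ))) = 2 * T ^ 2 * K * δ := by ring
          rw [this]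
          calc 2 * T ^ 2 * K * δ ≤ 2 * T ^ 2 * K * (ε / (8 * T ^ 2 * K)) := by
                exact mul_le_mul_of_nonneg_left hδ4 (by positivity)
            _ = ε / 4 := by field_simp; ring
        have e3 : T * (ε₂ * (T * (C + C)) + K * (T * (δ + δ))) =
            T * (ε₂ * (T * (C + C))) + T * (K * (T * (δ + δ))) := by ring
        linarith
      calc eLpNorm (fun x => ε₂ * (‖u₁ x‖ + ‖U₁ x‖) +
            K * (‖u₁ x - u₂ x‖ + ‖U₁ x - U₂ x‖)) q μΩ
          ≤ τ * (eLpNorm (fun x => ε₂ * (‖u₁ x‖ + ‖U₁ x‖)) q μΩ +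
            eLpNorm (fun x => K * (‖u₁ x - u₂ x‖ + ‖U₁ x - U₂ x‖)) q μΩ) :=
            eLpNorm_add_le' hm1 hm2 q
        _ ≤ ENNReal.ofReal T * (ENNReal.ofReal ε₂ * (ENNReal.ofReal T *
              (ENNReal.ofReal C + ENNReal.ofReal C)) +
            ENNReal.ofReal K * (ENNReal.ofReal T *
              (ENNReal.ofReal δ + ENNReal.ofReal δ))) := by
            refine mul_le_mul' hτT (add_le_add ?_ ?_)
            · exact le_trans hsmul1 (mul_le_mul' le_rfl
                (mul_le_mul' hτT le_rfl))
            · exact le_trans hsmul2 (mul_le_mul' le_rfl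
                (mul_le_mul' hτT le_rfl))
        _ = ENNReal.ofReal (T * (ε₂ * (T * (C + C)) + K * (T * (δ + δ)))) := by
            rw [c1, c2, ← ENNReal.ofReal_add (by positivity) (by positivity),
              ← ENNReal.ofReal_mul hT0.le]
        _ ≤ ENNReal.ofReal ε := ENNReal.ofReal_le_ofReal hreal
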